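/- Let ξ be a hyperbolic isometry of a proper geodesic δ-hyperbolic space X with minimal displacement L ≥ 300δ and axis τ. Fix ε ∈ (0,δ) and a point O with |O ξ(O)| ≤ L + ε. Then O is at distance at most 28δ from τ. -/
import Mathlib


open Metric Set

variable {X : Type*} [MetricSpace X]

/-- Four-point condition for δ-hyperbolicity. -/
def FourPointHyp (X : Type*) [MetricSpace X] (δ : ℝ) : Prop :=
  ∀ x y z w : X,
    dist x y + dist z w ≤ max (dist x z + dist y w) (dist y z + dist x w) + 2 * δ

/-- `s` is a geodesic segment from `a` to `b`. -/
def IsGeodSegment {X : Type*} [MetricSpace X] (a b : X) (s : Set X) : Prop :=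
  ∃ f : ℝ → X, f 0 = a ∧ f (dist a b) = b ∧
    (∀ u ∈ Icc (0:ℝ) (dist a b), ∀ v ∈ Icc (0:ℝ) (dist a b),
      dist (f u) (f v) = |u - v|) ∧
    s = f '' Icc (0:ℝ) (dist a b)

/-- `X` is a geodesic space. -/
def IsGeodesicSpace (X : Type*) [MetricSpace X] : Prop :=
  ∀ a b : X, ∃ s : Set X, IsGeodSegment a b s

/-- `τ : ℝ → X` is a geodesic line. -/
def IsGeodLine (τ : ℝ → X) : Prop := ∀ u v : ℝ, dist (τ u) (τ v) = |u - v|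

/-- An isometry is hyperbolic if the orbit map `n ↦ ξⁿ(x)` is a quasi-isometric
embedding of `ℤ` into `X`. -/
def IsHypIsom (ξ : X ≃ᵢ X) : Prop :=
  ∃ x : X, ∃ A : ℝ, 0 < A ∧ ∃ B : ℝ, ∀ m n : ℤ,
    A * |(m : ℝ) - (n : ℝ)| - B ≤ dist ((ξ ^ m) x) ((ξ ^ n) x)

/-- An axis of `ξ`: a geodesic line joining the two fixed points of `ξ` at infinity,
equivalently a geodesic line whose image is at finite Hausdorff distance from its
`ξ`-image. -/
def IsAxis (ξ : X ≃ᵢ X) (τ : ℝ → X) : Prop :=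
  IsGeodLine τ ∧ ∃ C : ℝ,
    (∀ t : ℝ, infDist (ξ (τ t)) (range τ) ≤ C) ∧
    (∀ t : ℝ, infDist (τ t) (range fun s => ξ (τ s)) ≤ C)

/-- The orbit points `x₁ = O`, `xᵢ = ξ^{i-1}(O)` for `i > 0`, `xᵢ = ξ^{i}(O)` for
`i < 0`. -/
noncomputable def orbitPt (ξ : X ≃ᵢ X) (O : X) (i : ℤ) : X :=
  if 0 < i then (ξ ^ (i - 1)) O else (ξ ^ i) O

/-- The Voronoi cell `Dᵢ` of the orbit point `xᵢ`. -/
noncomputable def vorCell (ξ : X ≃ᵢ X) (O : X) (i : ℤ) : Set X :=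
  {y : X | ∀ j : ℤ, j ≠ 0 → dist y (orbitPt ξ O i) ≤ dist y (orbitPt ξ O j)}

section Aux

variable {δ : ℝ}

/-- Gromov-product form of the four-point condition (doubled products). -/
lemma hypIneq (hyp : FourPointHyp X δ) (w x y z : X) :
    min (dist x w + dist z w - dist x z) (dist y w + dist z w - dist y z) ≤
      dist x w + dist y w - dist x y + 2 * δ := by
  have h := hyp x y z w
  rcases max_cases (dist x z + dist y w) (dist y z + dist x w) with ⟨he, _⟩ | ⟨he, _⟩ <;>
      rw [he] at h
  · exact le_trans (min_le_left _ _) (by linarith)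
  · exact le_trans (min_le_right _ _) (by linarith)

/-- A point between two points of a geodesic line. -/
lemma line_between {τ : ℝ → X} (hτ : IsGeodLine τ) (a t r : ℝ) (h0 : 0 ≤ r)
    (h1 : r ≤ dist (τ a) (τ t)) :
    ∃ t', dist (τ a) (τ t') = r ∧ dist (τ t') (τ t) = dist (τ a) (τ t) - r := by
  have hd : dist (τ a) (τ t) = |a - t| := hτ a t
  rcases le_total a t with hat | hat
  · have habs : |a - t| = t - a := by
      rw [show a - t = -(t - a) by ring, abs_neg, abs_of_nonneg (by linarith)]
    have h1' : r ≤ t - a := by rw [hd, habs] at h1; exact h1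
    refine ⟨a + r, ?_, ?_⟩
    · rw [hτ, show a - (a + r) = -r by ring, abs_neg, abs_of_nonneg h0]
    · rw [hτ, hd, habs, show a + r - t = -((t - a) - r) by ring, abs_neg,
        abs_of_nonneg (by linarith)]
  · have habs : |a - t| = a - t := abs_of_nonneg (by linarith)
    have h1' : r ≤ a - t := by rw [hd, habs] at h1; exact h1
    refine ⟨a - r, ?_, ?_⟩
    · rw [hτ, show a - (a - r) = r by ring, abs_of_nonneg h0]
    · rw [hτ, hd, habs, show a - r - t = (a - t) - r by ring,
        abs_of_nonneg (by linarith)]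

/-- Projection lemma: if `τ a` is a nearest point of the line `τ` to `x`, then
for any `τ t` we have `d(x, τa) + d(τa, τt) ≤ d(x, τt) + 4δ`. -/
lemma lemA (hyp : FourPointHyp X δ) (hδ : 0 ≤ δ) {τ : ℝ → X} (hτ : IsGeodLine τ)
    (x : X) (a t : ℝ) (hmin : ∀ u, dist x (τ a) ≤ dist x (τ u)) :
    dist x (τ a) + dist (τ a) (τ t) ≤ dist x (τ t) + 4 * δ := by
  set P : ℝ := dist x (τ a) + dist (τ a) (τ t) - dist x (τ t) with hPdef
  have htr1 := dist_triangle x (τ a) (τ t)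
  have htr2 := dist_triangle x (τ t) (τ a)
  have hcomm : dist (τ t) (τ a) = dist (τ a) (τ t) := dist_comm _ _
  have hP0 : 0 ≤ P := by simp only [hPdef]; linarith
  have hPq : P ≤ 2 * dist (τ a) (τ t) := by simp only [hPdef]; linarith
  have hd0 : (0:ℝ) ≤ dist (τ a) (τ t) := dist_nonneg
  set r : ℝ := min (P / 2) (dist (τ a) (τ t)) with hrdef
  have hr0 : 0 ≤ r := le_min (by linarith) hd0
  have hrd : r ≤ dist (τ a) (τ t) := min_le_right _ _
  have hrP : r ≤ P / 2 := min_le_left _ _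
  obtain ⟨t', h1, h2⟩ := line_between hτ a t r hr0 hrd
  have hkey := hypIneq hyp (τ a) x (τ t') (τ t)
  have harg1 : dist x (τ a) + dist (τ t) (τ a) - dist x (τ t) = P := by
    rw [hcomm]
  have harg2 : dist (τ t') (τ a) + dist (τ t) (τ a) - dist (τ t') (τ t) = 2 * r := by
    rw [dist_comm (τ t') (τ a), h1, hcomm, h2]; ring
  rw [harg1, harg2] at hkey
  have hminr : min P (2 * r) = 2 * r := min_eq_right (by linarith)
  rw [hminr] at hkey
  have h6 : dist x (τ a) ≤ dist x (τ t') := hmin t'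
  have h7 : dist (τ t') (τ a) = r := by rw [dist_comm]; exact h1
  rw [h7] at hkey
  -- hence r ≤ 2δ
  have hr2 : r ≤ 2 * δ := by linarith
  rcases le_total (P / 2) (dist (τ a) (τ t)) with h | h
  · have : r = P / 2 := min_eq_left h
    have : P ≤ 4 * δ := by rw [this] at hr2; linarith
    simp only [hPdef] at this; linarith
  · have hre : r = dist (τ a) (τ t) := min_eq_right h
    have : P ≤ 4 * δ := by rw [hre] at hr2; linarith
    simp only [hPdef] at this; linarith

/-- Any point is `(a,b)_w + 2δ`-close to any geodesic segment from `a` to `b`. -/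
lemma lemC (hyp : FourPointHyp X δ) {a b : X} {s : Set X} (hs : IsGeodSegment a b s)
    (w : X) : ∃ x ∈ s, 2 * dist w x ≤ dist w a + dist w b - dist a b + 4 * δ := by
  obtain ⟨f, hf0, hfd, hff, hfs⟩ := hs
  set t0 : ℝ := (dist a b + dist a w - dist b w) / 2 with ht0def
  have htri1 := dist_triangle a b w
  have htri2 := dist_triangle b a w
  have hcab : dist b a = dist a b := dist_comm _ _
  have h1 : 0 ≤ t0 := by simp only [ht0def]; linarith
  have h2 : t0 ≤ dist a b := by simp only [ht0def]; linarith
  have hmem : t0 ∈ Icc (0:ℝ) (dist a b) := ⟨h1, h2⟩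
  have hD : dist a b ∈ Icc (0:ℝ) (dist a b) := ⟨dist_nonneg, le_refl _⟩
  have h0m : (0:ℝ) ∈ Icc (0:ℝ) (dist a b) := ⟨le_refl _, dist_nonneg⟩
  have hax : dist a (f t0) = t0 := by
    have h := hff 0 h0m t0 hmem
    rw [hf0] at h
    rw [h, zero_sub, abs_neg, abs_of_nonneg h1]
  have hbx : dist (f t0) b = dist a b - t0 := by
    have h := hff t0 hmem (dist a b) hD
    rw [hfd] at h
    rw [h, abs_of_nonpos (by linarith), neg_sub]
  refine ⟨f t0, by rw [hfs]; exact mem_image_of_mem f hmem, ?_⟩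
  have h := hyp w (f t0) a b
  have ca : dist (f t0) a = dist a (f t0) := dist_comm _ _
  have caw : dist a w = dist w a := dist_comm _ _
  have cbw : dist b w = dist w b := dist_comm _ _
  have hmax : max (dist w a + dist (f t0) b) (dist (f t0) a + dist w b) ≤
      (dist w a + dist w b + dist a b) / 2 := by
    apply max_le
    · rw [hbx]; simp only [ht0def]; linarith
    · rw [ca, hax]; simp only [ht0def]; linarith
  linarith [h, hmax]

/-- Geodesic triangles are 3δ-slim. -/
lemma slim (hyp : FourPointHyp X δ) {a b c w : X} (hw : dist a w + dist w b = dist a b)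
    {s1 s2 : Set X} (h1 : IsGeodSegment a c s1) (h2 : IsGeodSegment c b s2) :
    ∃ x, (x ∈ s1 ∨ x ∈ s2) ∧ dist w x ≤ 3 * δ := by
  have h := hypIneq hyp w a b c
  have cwb : dist w b = dist b w := dist_comm _ _
  rcases le_total (dist a w + dist c w - dist a c) (dist b w + dist c w - dist b c)
      with hc | hc
  · rw [min_eq_left hc] at h
    obtain ⟨x, hx, hxd⟩ := lemC hyp h1 w
    refine ⟨x, Or.inl hx, ?_⟩
    have c1 : dist w a = dist a w := dist_comm _ _
    have c2 : dist w c = dist c w := dist_comm _ _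
    linarith
  · rw [min_eq_right hc] at h
    obtain ⟨x, hx, hxd⟩ := lemC hyp h2 w
    refine ⟨x, Or.inr hx, ?_⟩
    have c1 : dist w c = dist c w := dist_comm _ _
    have c2 : dist w b = dist b w := dist_comm _ _
    have c3 : dist c b = dist b c := dist_comm _ _
    linarith

/-- Additivity of distance along a geodesic segment. -/
lemma seg_add {a b x : X} {s : Set X} (hs : IsGeodSegment a b s) (hx : x ∈ s) :
    dist a x + dist x b = dist a b := by
  obtain ⟨f, hf0, hfd, hff, hfs⟩ := hs
  rw [hfs] at hx
  obtain ⟨u, hu, rfl⟩ := hx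
  have h0m : (0:ℝ) ∈ Icc (0:ℝ) (dist a b) := ⟨le_refl _, dist_nonneg⟩
  have hDm : dist a b ∈ Icc (0:ℝ) (dist a b) := ⟨dist_nonneg, le_refl _⟩
  have h1 := hff 0 h0m u hu
  rw [hf0] at h1
  have h2 := hff u hu (dist a b) hDm
  rw [hfd] at h2
  rw [h1, h2, zero_sub, abs_neg, abs_of_nonneg hu.1, abs_of_nonpos (by linarith [hu.2])]
  ring

/-- A subsegment of a geodesic line is a geodesic segment inside the line. -/
lemma line_seg {τ : ℝ → X} (hτ : IsGeodLine τ) (u v : ℝ) :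
    ∃ s : Set X, IsGeodSegment (τ u) (τ v) s ∧ s ⊆ range τ := by
  rcases le_total u v with h | h
  · have hD : dist (τ u) (τ v) = v - u := by
      rw [hτ, show u - v = -(v - u) by ring, abs_neg, abs_of_nonneg (by linarith)]
    refine ⟨(fun t => τ (u + t)) '' Icc 0 (dist (τ u) (τ v)),
      ⟨fun t => τ (u + t), by simp, ?_, ?_, rfl⟩, ?_⟩
    · show τ (u + dist (τ u) (τ v)) = τ v
      rw [hD]; congr 1; ring
    · intro t _ t' _
      show dist (τ (u + t)) (τ (u + t')) = |t - t'|
      rw [hτ, show u + t - (u + t') = t - t' by ring]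
    · rintro x ⟨t, _, rfl⟩; exact mem_range_self _
  · have hD : dist (τ u) (τ v) = u - v := by
      rw [hτ, abs_of_nonneg (by linarith)]
    refine ⟨(fun t => τ (u - t)) '' Icc 0 (dist (τ u) (τ v)),
      ⟨fun t => τ (u - t), by simp, ?_, ?_, rfl⟩, ?_⟩
    · show τ (u - dist (τ u) (τ v)) = τ v
      rw [hD]; congr 1; ring
    · intro t _ t' _
      show dist (τ (u - t)) (τ (u - t')) = |t - t'|
      rw [hτ, show u - t - (u - t') = -(t - t') by ring, abs_neg]
    · rintro x ⟨t, _, rfl⟩; exact mem_range_self _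

/-- The range of a geodesic line is closed. -/
lemma line_closed {τ : ℝ → X} (hτ : IsGeodLine τ) : IsClosed (range τ) := by
  have hiso : Isometry τ := Isometry.of_dist_eq fun u v => by rw [hτ, Real.dist_eq]
  exact hiso.isClosedEmbedding.isClosed_range

/-- A geodesic line lying within Hausdorff distance `C` of a geodesic line `τ`
is in fact within `6δ` of `τ`. -/
lemma lineClose [ProperSpace X] (hδ : 0 < δ) (hyp : FourPointHyp X δ)
    (hgeo : IsGeodesicSpace X) {σ τ : ℝ → X} (hσ : IsGeodLine σ) (hτ : IsGeodLine τ)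
    {C : ℝ} (hC : ∀ t, infDist (σ t) (range τ) ≤ C) (s : ℝ) :
    infDist (σ s) (range τ) ≤ 6 * δ := by
  have hclosed : IsClosed (range τ) := line_closed hτ
  have hne : (range τ).Nonempty := ⟨τ 0, mem_range_self 0⟩
  have hC0 : 0 ≤ C := le_trans infDist_nonneg (hC 0)
  set T : ℝ := C + 7 * δ + 1 with hT
  have hT0 : 0 ≤ T := by simp only [hT]; linarith
  obtain ⟨a', ⟨ua, rfl⟩, ha'⟩ := hclosed.exists_infDist_eq_dist hne (σ (s - T))
  obtain ⟨b', ⟨ub, rfl⟩, hb'⟩ := hclosed.exists_infDist_eq_dist hne (σ (s + T))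
  have ha'd : dist (σ (s - T)) (τ ua) ≤ C := by rw [← ha']; exact hC _
  have hb'd : dist (σ (s + T)) (τ ub) ≤ C := by rw [← hb']; exact hC _
  have hya : dist (σ (s - T)) (σ s) = T := by
    rw [hσ, show s - T - s = -T by ring, abs_neg, abs_of_nonneg hT0]
  have hyb : dist (σ s) (σ (s + T)) = T := by
    rw [hσ, show s - (s + T) = -T by ring, abs_neg, abs_of_nonneg hT0]
  have hab : dist (σ (s - T)) (σ (s + T)) = 2 * T := by
    rw [hσ, show s - T - (s + T) = -(2 * T) by ring, abs_neg,
      abs_of_nonneg (by linarith)]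
  obtain ⟨s1, hs1⟩ := hgeo (σ (s - T)) (τ ub)
  obtain ⟨s2, hs2⟩ := hgeo (τ ub) (σ (s + T))
  have hw1 : dist (σ (s - T)) (σ s) + dist (σ s) (σ (s + T)) =
      dist (σ (s - T)) (σ (s + T)) := by rw [hya, hyb, hab]; ring
  obtain ⟨x, hx, hxd⟩ := slim hyp hw1 hs1 hs2
  rcases hx with hx1 | hx2
  · -- x on the geodesic from σ(s-T) to τ ub
    have hwx : dist (σ (s - T)) x + dist x (τ ub) = dist (σ (s - T)) (τ ub) :=
      seg_add hs1 hx1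
    obtain ⟨s3, hs3⟩ := hgeo (σ (s - T)) (τ ua)
    obtain ⟨s4, hs4, hs4sub⟩ := line_seg hτ ua ub
    obtain ⟨x', hx', hx'd⟩ := slim hyp hwx hs3 hs4
    rcases hx' with h3 | h4
    · exfalso
      have h5 : dist (σ (s - T)) x' + dist x' (τ ua) = dist (σ (s - T)) (τ ua) :=
        seg_add hs3 h3
      have h6 : dist (σ (s - T)) x' ≤ C := by
        have := dist_nonneg (x := x') (y := τ ua); linarith [ha'd]
      have h7 := dist_triangle (σ (s - T)) x' (σ s)
      have h8 := dist_triangle x' x (σ s)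
      have c1 : dist x' x = dist x x' := dist_comm _ _
      have c2 : dist x (σ s) = dist (σ s) x := dist_comm _ _
      have c3 : dist x' (σ s) = dist (σ s) x' := dist_comm _ _
      -- dist (σ (s-T)) (σ s) = T but ≤ C + 6δ
      rw [hya] at h7
      simp only [hT] at h7
      linarith
    · have h9 := dist_triangle (σ s) x x'
      exact le_trans (infDist_le_dist_of_mem (hs4sub h4)) (by linarith)
  · exfalso
    have h5 : dist (τ ub) x + dist x (σ (s + T)) = dist (τ ub) (σ (s + T)) :=
      seg_add hs2 hx2
    have h6 : dist x (σ (s + T)) ≤ C := by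
      have := dist_nonneg (x := τ ub) (y := x)
      have c : dist (τ ub) (σ (s + T)) = dist (σ (s + T)) (τ ub) := dist_comm _ _
      linarith [hb'd]
    have h7 := dist_triangle (σ s) x (σ (s + T))
    rw [hyb] at h7
    simp only [hT] at h7
    linarith

end Aux

/-- If `ξ` is a hyperbolic isometry of a proper geodesic δ-hyperbolic space with
minimal displacement `L ≥ 300δ` and axis `τ`, and `|O ξ(O)| ≤ L + ε` with
`0 < ε < δ`, then `O` is at distance at most `28δ` from `τ`. -/
theorem stmt10 {X : Type*} [MetricSpace X] [ProperSpace X] (δ ε L : ℝ)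
    (hδ : 0 < δ) (hε : 0 < ε) (hεδ : ε < δ)
    (hyp : FourPointHyp X δ) (hgeo : IsGeodesicSpace X)
    (ξ : X ≃ᵢ X) (hhyp : IsHypIsom ξ) (τ : ℝ → X) (hax : IsAxis ξ τ)
    (hL : L = ⨅ x : X, dist x (ξ x)) (hL300 : 300 * δ ≤ L)
    (O : X) (hO : dist O (ξ O) ≤ L + ε) :
    infDist O (range τ) ≤ 28 * δ := by
  obtain ⟨hτline, C, hC1, hC2⟩ := hax
  have hδ0 : (0:ℝ) ≤ δ := le_of_lt hδ
  have hclosed : IsClosed (range τ) := line_closed hτline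
  have hne : (range τ).Nonempty := ⟨τ 0, mem_range_self 0⟩
  -- displacement lower bound
  have hdisp : ∀ x : X, L ≤ dist x (ξ x) := by
    intro x; rw [hL]
    exact ciInf_le ⟨0, by rintro _ ⟨y, rfl⟩; exact dist_nonneg⟩ x
  -- ξ ∘ τ is a geodesic line
  have hξτ : IsGeodLine (fun s => ξ (τ s)) := fun u v =>
    (ξ.dist_eq _ _).trans (hτline u v)
  -- projections of O and ξ O to τ
  obtain ⟨p, ⟨sp, rfl⟩, hpd⟩ := hclosed.exists_infDist_eq_dist hne O
  obtain ⟨q, ⟨sq, rfl⟩, hqd⟩ := hclosed.exists_infDist_eq_dist hne (ξ O)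
  have hpmin : ∀ u, dist O (τ sp) ≤ dist O (τ u) := fun u => by
    rw [← hpd]; exact infDist_le_dist_of_mem (mem_range_self u)
  have hqmin : ∀ u, dist (ξ O) (τ sq) ≤ dist (ξ O) (τ u) := fun u => by
    rw [← hqd]; exact infDist_le_dist_of_mem (mem_range_self u)
  -- ξ(τ sp) is 6δ-close to τ
  have hclose1 : infDist (ξ (τ sp)) (range τ) ≤ 6 * δ :=
    lineClose hδ hyp hgeo hξτ hτline hC1 sp
  obtain ⟨q', ⟨sq', rfl⟩, hq'⟩ := hclosed.exists_infDist_eq_dist hne (ξ (τ sp))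
  have hq'6 : dist (ξ (τ sp)) (τ sq') ≤ 6 * δ := by rw [← hq']; exact hclose1
  have hOp : dist (ξ O) (ξ (τ sp)) = dist O (τ sp) := ξ.dist_eq _ _
  -- d₂ ≤ d + 6δ
  have hd2le : dist (ξ O) (τ sq) ≤ dist O (τ sp) + 6 * δ := by
    have h1 := hqmin sq'
    have h2 := dist_triangle (ξ O) (ξ (τ sp)) (τ sq')
    linarith [hOp]
  -- d₂ ≥ d − 6δ
  have hclose2 : infDist (τ sq) (range fun s => ξ (τ s)) ≤ 6 * δ :=
    lineClose hδ hyp hgeo hτline hξτ hC2 sq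
  have hrngξ : IsClosed (range fun s => ξ (τ s)) := line_closed hξτ
  obtain ⟨r, ⟨w, rfl⟩, hr⟩ :=
    hrngξ.exists_infDist_eq_dist ⟨ξ (τ 0), mem_range_self 0⟩ (τ sq)
  have hr6 : dist (τ sq) (ξ (τ w)) ≤ 6 * δ := by rw [← hr]; exact hclose2
  have hd2ge : dist O (τ sp) - 6 * δ ≤ dist (ξ O) (τ sq) := by
    have h1 : dist O (τ sp) ≤ dist O (τ w) := hpmin w
    have h2 : dist (ξ O) (ξ (τ w)) = dist O (τ w) := ξ.dist_eq _ _
    have h3 := dist_triangle (ξ O) (τ sq) (ξ (τ w))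
    linarith
  -- d(τ sq, τ sq') ≤ 16δ
  have hA1 := lemA hyp hδ0 hτline (ξ O) sq sq' hqmin
  have hq'close : dist (ξ O) (τ sq') ≤ dist O (τ sp) + 6 * δ := by
    have h2 := dist_triangle (ξ O) (ξ (τ sp)) (τ sq')
    linarith [hOp]
  have hqq' : dist (τ sq) (τ sq') ≤ 16 * δ := by linarith
  -- d(τ sp, τ sq') ≥ L − 6δ
  have hpq' : L - 6 * δ ≤ dist (τ sp) (τ sq') := by
    have h1 := hdisp (τ sp)
    have h2 := dist_triangle (τ sp) (τ sq') (ξ (τ sp))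
    have c1 : dist (τ sq') (ξ (τ sp)) = dist (ξ (τ sp)) (τ sq') := dist_comm _ _
    linarith
  -- d(τ sp, τ sq) ≥ L − 22δ
  have hpq : L - 22 * δ ≤ dist (τ sp) (τ sq) := by
    have h1 := dist_triangle (τ sp) (τ sq) (τ sq')
    linarith
  -- projection lemma for O and for ξO
  have hA2 := lemA hyp hδ0 hτline O sp sq hpmin
  have hA3 := lemA hyp hδ0 hτline (ξ O) sq sp hqmin
  -- main Gromov product estimate at τ sq
  have hkey := hypIneq hyp (τ sq) (ξ O) (τ sp) O
  have c1 : dist (τ sq) (τ sp) = dist (τ sp) (τ sq) := dist_comm _ _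
  have c2 : dist (τ sp) O = dist O (τ sp) := dist_comm _ _
  have c3 : dist O (τ sq) = dist (τ sq) O := dist_comm _ _
  have c4 : dist (ξ O) O = dist O (ξ O) := dist_comm _ _
  rw [hpd]
  rcases le_total (dist (ξ O) (τ sq) + dist O (τ sq) - dist (ξ O) O)
      (dist (τ sp) (τ sq) + dist O (τ sq) - dist (τ sp) O) with hmm | hmm
  · rw [min_eq_left hmm] at hkey
    -- dist ξO (τ sq) + dist O (τ sq) − dist O ξO ≤ 6δ
    linarith [hA3, hA2, hkey]
  · rw [min_eq_right hmm] at hkey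
    linarith [hA3, hA2, hkey]
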